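/- The symmetric part |A + Aᵀ|/2 (in Frobenius norm) is the first-order Taylor expansion of the function A ↦ dist(Id + A, SO(n)) at A = 0; that is, dist(Id + tA, SO(n)) = t·|(A + Aᵀ)/2| + o(t) as t → 0⁺ for every n×n real matrix A. -/

import Mathlib

open Matrix Filter Asymptotics Topology

noncomputable def frob {n : ℕ} (A : Matrix (Fin n) (Fin n) ℝ) : ℝ :=
  Real.sqrt (∑ i, ∑ j, (A i j) ^ 2)

def SOset (n : ℕ) : Set (Matrix (Fin n) (Fin n) ℝ) :=
  {Q | Qᵀ * Q = 1 ∧ Q.det = 1}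

noncomputable def distSO {n : ℕ} (A : Matrix (Fin n) (Fin n) ℝ) : ℝ :=
  sInf ((fun Q => frob (A - Q)) '' SOset n)

section Aux
open scoped Matrix
attribute [local instance] Matrix.frobeniusSeminormedAddCommGroup
  Matrix.frobeniusNormedAddCommGroup Matrix.frobeniusNormedSpace
  Matrix.frobeniusNormedRing Matrix.frobeniusNormedAlgebra

variable {n : ℕ}

lemma frob_eq_norm (A : Matrix (Fin n) (Fin n) ℝ) : frob A = ‖A‖ := by
  rw [Matrix.frobenius_norm_def, frob, Real.sqrt_eq_rpow]
  congr 1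
  refine Finset.sum_congr rfl fun i _ => Finset.sum_congr rfl fun j _ => ?_
  rw [Real.rpow_two, Real.norm_eq_abs, sq_abs]

lemma norm_sq_eq_trace (X : Matrix (Fin n) (Fin n) ℝ) : ‖X‖ ^ 2 = trace (Xᵀ * X) := by
  rw [← frob_eq_norm, frob, Real.sq_sqrt]
  · simp [Matrix.trace, Matrix.mul_apply, Matrix.diag, sq]
    rw [Finset.sum_comm]
  · positivity

lemma one_mem_SOset : (1 : Matrix (Fin n) (Fin n) ℝ) ∈ SOset n := by
  constructor <;> simp [SOset]

lemma SOset_nonempty : ((fun Q => frob (M - Q)) '' SOset n).Nonempty :=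
  ⟨_, ⟨1, one_mem_SOset, rfl⟩⟩

lemma SOset_bddBelow {M : Matrix (Fin n) (Fin n) ℝ} :
    BddBelow ((fun Q => frob (M - Q)) '' SOset n) := by
  refine ⟨0, fun x hx => ?_⟩
  obtain ⟨Q, _, rfl⟩ := hx
  simp only [frob_eq_norm]; positivity

lemma distSO_le {M Q : Matrix (Fin n) (Fin n) ℝ} (hQ : Q ∈ SOset n) :
    distSO M ≤ ‖M - Q‖ := by
  rw [← frob_eq_norm]
  exact csInf_le SOset_bddBelow ⟨Q, hQ, rfl⟩

lemma le_distSO {M : Matrix (Fin n) (Fin n) ℝ} {c : ℝ}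
    (h : ∀ Q ∈ SOset n, c ≤ ‖M - Q‖) : c ≤ distSO M := by
  refine le_csInf SOset_nonempty ?_
  rintro x ⟨Q, hQ, rfl⟩
  simp only [frob_eq_norm]; exact h Q hQ

lemma distSO_sub_le (X Y : Matrix (Fin n) (Fin n) ℝ) :
    distSO X - distSO Y ≤ ‖X - Y‖ := by
  rw [sub_le_iff_le_add, add_comm]
  have : distSO X - ‖X - Y‖ ≤ distSO Y := by
    refine le_distSO fun Q hQ => ?_
    rw [sub_le_iff_le_add]
    calc distSO X ≤ ‖X - Q‖ := distSO_le hQ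
      _ = ‖(X - Y) + (Y - Q)‖ := by rw [sub_add_sub_cancel]
      _ ≤ ‖X - Y‖ + ‖Y - Q‖ := norm_add_le _ _
      _ = ‖Y - Q‖ + ‖X - Y‖ := by ring
  linarith

lemma abs_distSO_sub_le (M M' : Matrix (Fin n) (Fin n) ℝ) :
    |distSO M - distSO M'| ≤ ‖M - M'‖ := by
  rw [abs_sub_le_iff]
  refine ⟨distSO_sub_le _ _, ?_⟩
  rw [← norm_neg]
  simpa using distSO_sub_le M' M

lemma norm_orth_mul {R X : Matrix (Fin n) (Fin n) ℝ} (hR : Rᵀ * R = 1) :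
    ‖R * X‖ = ‖X‖ := by
  have h2 : ‖R * X‖ ^ 2 = ‖X‖ ^ 2 := by
    rw [norm_sq_eq_trace, norm_sq_eq_trace, Matrix.transpose_mul, Matrix.mul_assoc,
      ← Matrix.mul_assoc Rᵀ R X, hR, Matrix.one_mul]
  nlinarith [norm_nonneg (R * X), norm_nonneg X, h2]

lemma SOset_mul {R Q : Matrix (Fin n) (Fin n) ℝ} (hR : R ∈ SOset n) (hQ : Q ∈ SOset n) :
    R * Q ∈ SOset n := by
  obtain ⟨hR1, hR2⟩ := hR
  obtain ⟨hQ1, hQ2⟩ := hQ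
  constructor
  · rw [Matrix.transpose_mul, Matrix.mul_assoc, ← Matrix.mul_assoc Rᵀ R Q, hR1,
      Matrix.one_mul, hQ1]
  · rw [Matrix.det_mul, hR2, hQ2, mul_one]

lemma SOset_transpose {R : Matrix (Fin n) (Fin n) ℝ} (hR : R ∈ SOset n) :
    Rᵀ ∈ SOset n := by
  obtain ⟨hR1, hR2⟩ := hR
  have h2 : R * Rᵀ = 1 := mul_eq_one_comm.mp hR1
  exact ⟨by rw [Matrix.transpose_transpose]; exact h2, by rw [Matrix.det_transpose]; exact hR2⟩

lemma distSO_orth_mul {R : Matrix (Fin n) (Fin n) ℝ} (hR : R ∈ SOset n)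
    (M : Matrix (Fin n) (Fin n) ℝ) : distSO (R * M) = distSO M := by
  have key : ∀ R' : Matrix (Fin n) (Fin n) ℝ, R' ∈ SOset n →
      ∀ M', distSO (R' * M') ≤ distSO M' := by
    intro R' hR' M'
    refine le_csInf SOset_nonempty ?_
    rintro x ⟨Q, hQ, rfl⟩
    simp only [frob_eq_norm]
    calc distSO (R' * M') ≤ ‖R' * M' - R' * Q‖ := distSO_le (SOset_mul hR' hQ)
      _ = ‖R' * (M' - Q)‖ := by rw [Matrix.mul_sub]
      _ = ‖M' - Q‖ := norm_orth_mul hR'.1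
  refine le_antisymm (key R hR M) ?_
  have := key Rᵀ (SOset_transpose hR) (R * M)
  rwa [← Matrix.mul_assoc, hR.1, Matrix.one_mul] at this

lemma mulVec_norm_sq {Q : Matrix (Fin n) (Fin n) ℝ} (hQ : Qᵀ * Q = 1) (v : Fin n → ℝ) :
    (Q *ᵥ v) ⬝ᵥ (Q *ᵥ v) = v ⬝ᵥ v := by
  rw [Matrix.dotProduct_mulVec]
  have h1 : (Q *ᵥ v) ᵥ* Q = v := by
    rw [← Matrix.vecMul_transpose, Matrix.vecMul_vecMul, hQ, Matrix.vecMul_one]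
  rw [h1]

lemma trace_mul_le_trace {N Q : Matrix (Fin n) (Fin n) ℝ} (hN : N.PosSemidef)
    (hQ : Qᵀ * Q = 1) : trace (N * Q) ≤ trace N := by
  obtain ⟨B, hB⟩ : ∃ B : Matrix (Fin n) (Fin n) ℝ, N = Bᴴ * B := by
    open scoped MatrixOrder Matrix.Norms.L2Operator in
    exact CStarAlgebra.nonneg_iff_eq_star_mul_self.mp hN.nonneg
  rw [Matrix.conjTranspose_eq_transpose_of_trivial] at hB
  subst hB
  have hQ' : (Qᵀ)ᵀ * Qᵀ = 1 := by
    rw [Matrix.transpose_transpose]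
    exact mul_eq_one_comm.mp hQ
  rw [Matrix.mul_assoc, Matrix.trace_mul_comm]
  have hdiag : ∀ i, ((B * Q) * Bᵀ) i i ≤ ∑ j, B i j ^ 2 := by
    intro i
    have hd : ((B * Q) * Bᵀ) i i = ∑ j, (Qᵀ *ᵥ B i) j * B i j := by
      simp only [Matrix.mul_apply, Matrix.transpose_apply, Matrix.mulVec, dotProduct]
      congr 1; ext j; congr 1
      refine Finset.sum_congr rfl fun k _ => ?_
      ring
    have hg : ∑ j, (Qᵀ *ᵥ B i) j ^ 2 = ∑ j, B i j ^ 2 := by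
      have := mulVec_norm_sq hQ' (B i)
      simpa [dotProduct, sq] using this
    have hcs := Finset.sum_mul_sq_le_sq_mul_sq Finset.univ (fun j => (Qᵀ *ᵥ B i) j)
      (fun j => B i j)
    rw [hg] at hcs
    have hnn : (0:ℝ) ≤ ∑ j, B i j ^ 2 := by positivity
    rw [hd]
    nlinarith [hcs, hnn]
  have htr : trace (Bᵀ * B) = ∑ i, ∑ j, B i j ^ 2 := by
    simp only [Matrix.trace, Matrix.diag, Matrix.mul_apply, Matrix.transpose_apply, sq]
    exact Finset.sum_comm
  rw [htr]
  exact Finset.sum_le_sum fun i _ => hdiag i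

lemma norm_sub_sq_trace (X Y : Matrix (Fin n) (Fin n) ℝ) :
    ‖X - Y‖ ^ 2 = trace (Xᵀ * X) - 2 * trace (Xᵀ * Y) + trace (Yᵀ * Y) := by
  rw [norm_sq_eq_trace, Matrix.transpose_sub, Matrix.sub_mul, Matrix.mul_sub, Matrix.mul_sub,
    Matrix.trace_sub, Matrix.trace_sub, Matrix.trace_sub]
  have : trace (Yᵀ * X) = trace (Xᵀ * Y) := by
    rw [← Matrix.trace_transpose (Yᵀ * X), Matrix.transpose_mul, Matrix.transpose_transpose]
  rw [this]; ring

lemma distSO_psd {N : Matrix (Fin n) (Fin n) ℝ} (hN : N.PosSemidef) :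
    distSO N = ‖N - 1‖ := by
  have hNt : Nᵀ = N := by
    have := hN.1
    rwa [Matrix.IsHermitian, Matrix.conjTranspose_eq_transpose_of_trivial] at this
  refine le_antisymm (distSO_le one_mem_SOset) (le_distSO fun Q hQ => ?_)
  have h1 : ‖N - 1‖ ^ 2 ≤ ‖N - Q‖ ^ 2 := by
    rw [norm_sub_sq_trace, norm_sub_sq_trace, hNt, hQ.1, Matrix.transpose_one,
      Matrix.one_mul, Matrix.mul_one]
    have e2 := trace_mul_le_trace hN hQ.1
    linarith
  nlinarith [norm_nonneg (N - 1), norm_nonneg (N - Q), h1]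

lemma quad_form_bound (S : Matrix (Fin n) (Fin n) ℝ) (x : Fin n → ℝ) :
    |x ⬝ᵥ (S *ᵥ x)| ≤ (∑ i, ∑ j, |S i j|) * (x ⬝ᵥ x) := by
  have hx : ∀ i j : Fin n, |x i| * |x j| ≤ x ⬝ᵥ x := by
    intro i j
    have h1 : x i ^ 2 ≤ x ⬝ᵥ x := by
      simpa [dotProduct, sq] using
        Finset.single_le_sum (f := fun k => x k * x k)
          (fun k _ => mul_self_nonneg (x k)) (Finset.mem_univ i)
    have h2 : x j ^ 2 ≤ x ⬝ᵥ x := by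
      simpa [dotProduct, sq] using
        Finset.single_le_sum (f := fun k => x k * x k)
          (fun k _ => mul_self_nonneg (x k)) (Finset.mem_univ j)
    nlinarith [abs_nonneg (x i), abs_nonneg (x j), sq_abs (x i), sq_abs (x j)]
  calc |x ⬝ᵥ (S *ᵥ x)| = |∑ i, ∑ j, x i * S i j * x j| := by
        simp only [dotProduct, Matrix.mulVec, Finset.mul_sum]
        congr 1
        exact Finset.sum_congr rfl fun i _ => Finset.sum_congr rfl fun j _ => by ring
    _ ≤ ∑ i, ∑ j, |x i * S i j * x j| := by
        refine (Finset.abs_sum_le_sum_abs _ _).trans ?_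
        exact Finset.sum_le_sum fun i _ => Finset.abs_sum_le_sum_abs _ _
    _ ≤ ∑ i, ∑ j, |S i j| * (x ⬝ᵥ x) := by
        refine Finset.sum_le_sum fun i _ => Finset.sum_le_sum fun j _ => ?_
        rw [abs_mul, abs_mul]
        calc |x i| * |S i j| * |x j| = |S i j| * (|x i| * |x j|) := by ring
          _ ≤ |S i j| * (x ⬝ᵥ x) := by
              exact mul_le_mul_of_nonneg_left (hx i j) (abs_nonneg _)
    _ = (∑ i, ∑ j, |S i j|) * (x ⬝ᵥ x) := by rw [Finset.sum_mul]; congr 1; ext i; rw [Finset.sum_mul]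

lemma posSemidef_one_add_smul {S : Matrix (Fin n) (Fin n) ℝ} (hS : Sᵀ = S) {t : ℝ}
    (ht : 0 ≤ t) (ht' : t * (∑ i, ∑ j, |S i j|) ≤ 1) :
    (1 + t • S).PosSemidef := by
  refine Matrix.PosSemidef.of_dotProduct_mulVec_nonneg ?_ ?_
  · rw [Matrix.IsHermitian, Matrix.conjTranspose_eq_transpose_of_trivial,
      Matrix.transpose_add, Matrix.transpose_one, Matrix.transpose_smul, hS]
  · intro x
    have hsx : star x = x := by ext i; simp
    rw [hsx, Matrix.add_mulVec, Matrix.one_mulVec, Matrix.smul_mulVec,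
      dotProduct_add, dotProduct_smul]
    have hb := quad_form_bound S x
    have hxx : (0:ℝ) ≤ x ⬝ᵥ x := Finset.sum_nonneg fun i _ => mul_self_nonneg (x i)
    have habs : |x ⬝ᵥ (S *ᵥ x)| ≤ (∑ i, ∑ j, |S i j|) * (x ⬝ᵥ x) := hb
    have hc : (0:ℝ) ≤ ∑ i, ∑ j, |S i j| :=
      Finset.sum_nonneg fun i _ => Finset.sum_nonneg fun j _ => abs_nonneg _
    have := abs_le.mp habs
    have key : t * (x ⬝ᵥ (S *ᵥ x)) ≥ -(x ⬝ᵥ x) := by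
      nlinarith [this.1, mul_le_mul_of_nonneg_left this.1 ht]
    simp only [smul_eq_mul]
    linarith

open NormedSpace in
lemma exp_skew_orth {X : Matrix (Fin n) (Fin n) ℝ} (hX : Xᵀ = -X) :
    (exp X)ᵀ * exp X = 1 := by
  rw [← Matrix.exp_transpose, hX,
    ← Matrix.exp_add_of_commute (-X) X ((Commute.refl X).neg_left),
    neg_add_cancel, exp_zero]

open NormedSpace in
lemma exp_skew_mem_SOset {X : Matrix (Fin n) (Fin n) ℝ} (hX : Xᵀ = -X) :
    exp X ∈ SOset n := by
  refine ⟨exp_skew_orth hX, ?_⟩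
  set d : ℝ → ℝ := fun s => (exp (s • X)).det with hd
  have hskew : ∀ s : ℝ, (s • X)ᵀ = -(s • X) := by
    intro s; rw [Matrix.transpose_smul, hX, smul_neg]
  have hsq : ∀ s : ℝ, d s * d s = 1 := by
    intro s
    have h1 : (exp (s • X))ᵀ * exp (s • X) = 1 := exp_skew_orth (hskew s)
    have := congrArg Matrix.det h1
    rwa [Matrix.det_mul, Matrix.det_transpose, Matrix.det_one] at this
  have hcont : Continuous d := by
    exact (exp_continuous.comp ((continuous_id.smul continuous_const))).matrix_det
  have hd0 : d 0 = 1 := by simp [hd, exp_zero]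
  have hd1 : d 1 = (exp X).det := by simp [hd]
  rcases mul_self_eq_one_iff.mp (hsq 1) with h | h
  · rw [← hd1]; exact h
  · exfalso
    have h0mem : (0:ℝ) ∈ Set.Icc (d 1) (d 0) := by
      rw [hd0, h]; constructor <;> norm_num
    obtain ⟨s, _, hs⟩ := intermediate_value_Icc' (by norm_num : (0:ℝ) ≤ 1)
      hcont.continuousOn h0mem
    have := hsq s
    rw [hs] at this
    norm_num at this

lemma distSO_one_add_smul_psd {S : Matrix (Fin n) (Fin n) ℝ} (hS : Sᵀ = S) {t : ℝ}
    (ht : 0 ≤ t) (ht' : t * (∑ i, ∑ j, |S i j|) ≤ 1) :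
    distSO (1 + t • S) = t * ‖S‖ := by
  rw [distSO_psd (posSemidef_one_add_smul hS ht ht'), add_sub_cancel_left, norm_smul,
    Real.norm_eq_abs, abs_of_nonneg ht]

open NormedSpace in
lemma exp_deriv_littleO (A W : Matrix (Fin n) (Fin n) ℝ) :
    (fun t : ℝ => exp (t • (-W)) * (1 + t • A) - 1 - t • (A - W))
      =o[𝓝 (0:ℝ)] fun t => t := by
  have h1 := hasDerivAt_exp_smul_const (𝕂 := ℝ) (-W) (0 : ℝ)
  have h2 : HasDerivAt (fun t : ℝ => (1 : Matrix (Fin n) (Fin n) ℝ) + t • A) A 0 := by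
    have := ((hasDerivAt_id' (0:ℝ)).smul_const A).const_add (1 : Matrix (Fin n) (Fin n) ℝ)
    rw [one_smul] at this
    exact this
  have h3 := h1.mul h2
  simp only [zero_smul, exp_zero, one_mul, mul_one] at h3
  have h4 := hasDerivAt_iff_isLittleO.mp h3
  simp only [zero_smul, exp_zero, one_mul, mul_one, sub_zero, add_zero] at h4
  have heq : (fun t : ℝ => exp (t • (-W)) * (1 + t • A) - 1 - t • (A - W)) =
      fun t : ℝ => exp (t • (-W)) * (1 + t • A) - 1 - t • (-W + A) := by
    funext t
    congr 2
    simp [sub_eq_add_neg, add_comm]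
  rw [heq]
  simp only [Pi.mul_apply, zero_smul, exp_zero, one_mul, add_zero] at h4
  exact h4

open NormedSpace

/-- `dist(Id + tA, SO(n)) = t·|(A + Aᵀ)/2| + o(t)` as `t → 0⁺`; i.e. the
Frobenius norm of the symmetric part of `A` is the first-order Taylor expansion of
`A ↦ dist(Id + A, SO(n))` at `A = 0`. -/
theorem stmt1 (n : ℕ) (A : Matrix (Fin n) (Fin n) ℝ) :
    (fun t : ℝ => distSO (1 + t • A) - t * frob (((1 : ℝ) / 2) • (A + Aᵀ)))
      =o[𝓝[>] (0 : ℝ)] fun t => t := by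
  set S : Matrix (Fin n) (Fin n) ℝ := ((1:ℝ)/2) • (A + Aᵀ) with hSdef
  set W : Matrix (Fin n) (Fin n) ℝ := ((1:ℝ)/2) • (A - Aᵀ) with hWdef
  have hS : Sᵀ = S := by
    rw [hSdef, Matrix.transpose_smul, Matrix.transpose_add, Matrix.transpose_transpose,
      add_comm Aᵀ A]
  have hW : Wᵀ = -W := by
    rw [hWdef, Matrix.transpose_smul, Matrix.transpose_sub, Matrix.transpose_transpose,
      ← smul_neg, neg_sub]
  have hAW : A - W = S := by rw [hSdef, hWdef]; module
  have hg := (exp_deriv_littleO A W).mono (nhdsWithin_le_nhds (s := Set.Ioi (0:ℝ)))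
  simp only [hAW] at hg
  set c : ℝ := ∑ i, ∑ j, |S i j| with hc
  have hc0 : 0 ≤ c :=
    Finset.sum_nonneg fun i _ => Finset.sum_nonneg fun j _ => abs_nonneg _
  set δ : ℝ := 1/(c+1) with hδdef
  have hδ : 0 < δ := by rw [hδdef]; positivity
  have hbound : ∀ t ∈ Set.Ioo (0:ℝ) δ,
      ‖distSO (1 + t • A) - t * frob S‖ ≤
        1 * ‖exp (t • (-W)) * (1 + t • A) - 1 - t • S‖ := by
    intro t ht
    have ht0 : 0 < t := ht.1
    have htc : t * c ≤ 1 := by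
      have h1 : t < 1/(c+1) := ht.2
      rw [lt_div_iff₀ (by positivity : (0:ℝ) < c + 1)] at h1
      nlinarith
    have hskew : (t • (-W))ᵀ = -(t • (-W)) := by
      simp [Matrix.transpose_smul, Matrix.transpose_neg, hW]
    have hR := exp_skew_mem_SOset hskew
    have e1 : distSO (1 + t • A) = distSO (exp (t • (-W)) * (1 + t • A)) :=
      (distSO_orth_mul hR _).symm
    have e2 : distSO (1 + t • S) = t * ‖S‖ := distSO_one_add_smul_psd hS ht0.le htc
    have e3 := abs_distSO_sub_le (exp (t • (-W)) * (1 + t • A)) (1 + t • S)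
    have e4 : exp (t • (-W)) * (1 + t • A) - (1 + t • S) =
        exp (t • (-W)) * (1 + t • A) - 1 - t • S := by
      rw [sub_sub]
    rw [e4] at e3
    rw [one_mul, Real.norm_eq_abs, frob_eq_norm, e1, ← e2]
    exact e3
  have hbig : (fun t : ℝ => distSO (1 + t • A) - t * frob S) =O[𝓝[>] (0:ℝ)]
      (fun t : ℝ => exp (t • (-W)) * (1 + t • A) - 1 - t • S) := by
    rw [Asymptotics.isBigO_iff]
    refine ⟨1, ?_⟩
    filter_upwards [Ioo_mem_nhdsGT_of_mem ⟨le_refl (0:ℝ), hδ⟩] with t ht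
    exact hbound t ht
  exact hbig.trans_isLittleO hg

end Aux
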